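/- arXiv:2601.00831 — 3 statements merged into one kernel-verified Lean document; each statement's English description precedes it below -/
import Mathlib

section
/- The prefix-commitment MDP with windowed data is not H-sufficient: there exist two deterministic policies (choosing initial actions L and R respectively) whose induced trajectories have identical collections of observable length-H windows — (τ_L(t), …, τ_L(t+H)) = (τ_R(t), …, τ_R(t+H)) for every window start t with 1 ≤ t and t + H ≤ H+1 — yet whose full-horizon returns differ: G(τ_L) = 1 ≠ 0 = G(τ_R). -/
/-!
Prefix-commitment MDP with windowed offline data: failure of `H`-sufficiency.
-/

/-- States of the prefix-commitment MDP: `Sum.inl t` is the chain state `s_t`,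
`Sum.inr true` is the good terminal `g`, `Sum.inr false` is the bad terminal `b`. -/
abbrev PCState : Type := ℕ ⊕ Bool

/-- Trajectory induced by the initial action `L`. -/
def tauL (H : ℕ) (t : ℕ) : PCState :=
  if t ≤ H + 1 then Sum.inl t else Sum.inr true

/-- Trajectory induced by the initial action `R`. -/
def tauR (H : ℕ) (t : ℕ) : PCState :=
  if t ≤ H + 1 then Sum.inl t else Sum.inr false

/-- Reward sequence under `L`: reward `1` at the final step `H+1`, `0` elsewhere. -/
def rL (H : ℕ) (t : ℕ) : ℝ := if t = H + 1 then 1 else 0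

/-- Reward sequence under `R`: identically `0`. -/
def rR (H : ℕ) (t : ℕ) : ℝ := 0

/-- Full-horizon return: the sum of the rewards over the `H+2` steps. -/
def ret (H : ℕ) (r : ℕ → ℝ) : ℝ := ∑ t ∈ Finset.range (H + 2), r t

/-- Two trajectories induce identical collections of observable length-`H` windows:
the windows with start time `t` satisfying `1 ≤ t` and `t + H ≤ H+1` agree entrywise. -/
def SameWindows (H : ℕ) {S : Type*} (τ τ' : ℕ → S) : Prop :=
  ∀ t, 1 ≤ t → t + H ≤ H + 1 → ∀ i, i ≤ H → τ (t + i) = τ' (t + i)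

/-- An offline problem, given as a family of policies `p` with induced trajectories
`traj p` and reward sequences `rew p`, is `H`-sufficient if any two policies inducing
identical collections of observable length-`H` windows have equal full-horizon returns. -/
def HSufficient (H : ℕ) {S : Type*} {P : Type*}
    (traj : P → ℕ → S) (rew : P → ℕ → ℝ) : Prop :=
  ∀ p q : P, SameWindows H (traj p) (traj q) → ret H (rew p) = ret H (rew q)

/-- The prefix-commitment MDP with windowed data is not
`H`-sufficient: the two deterministic policies choosing initial actions `L` and `R`
(indexed by `Bool`, `true ↦ L`) induce identical collections of observable
length-`H` windows, yet their full-horizon returns differ: `G(τ_L) = 1 ≠ 0 = G(τ_R)`. -/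
theorem prefix_not_H_sufficient (H : ℕ) (hH : 1 ≤ H) :
    SameWindows H (tauL H) (tauR H) ∧
    ret H (rL H) = 1 ∧ ret H (rR H) = 0 ∧ ret H (rL H) ≠ ret H (rR H) ∧
    ¬ HSufficient H (fun p : Bool => if p then tauL H else tauR H)
        (fun p : Bool => if p then rL H else rR H) := by

  have hSW : SameWindows H (tauL H) (tauR H) := by
    intro t ht htH i hi
    have : t + i ≤ H + 1 := le_trans (by omega) htH
    simp [tauL, tauR, this]
  have hL : ret H (rL H) = 1 := by
    unfold ret rL
    rw [Finset.sum_ite_eq' (Finset.range (H + 2)) (H + 1) (fun _ => (1:ℝ))]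
    simp
  have hR : ret H (rR H) = 0 := by simp [ret, rR]
  refine ⟨hSW, hL, hR, by rw [hL, hR]; norm_num, fun hs => ?_⟩
  have := hs true false hSW
  simp [hL, hR] at this
end

section
/- In the short-segment MDP with M > H+1, the truncated and true objectives induce opposite orderings on the all-greedy and all-patient policies: J_H(a_greedy) = H+1 > 0 = J_H(a_patient), while J(a_greedy) = (H+1) − M < 0 = J(a_patient). Hence optimizing the truncated objective J_H does not yield the same policy ordering as optimizing the full-horizon objective J. -/
/-!
Short-segment MDP with `M > H+1`: the truncated and true objectives induce
opposite orderings on the all-greedy and all-patient policies.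
-/

/-- Truncated return: the number of greedy steps (`true` = greedy, `false` = patient). -/
def JH (H : ℕ) (a : Fin (H + 1) → Bool) : ℝ :=
  ((Finset.univ.filter fun t => a t = true).card : ℝ)

/-- True (full-horizon) return: `J(a) = J_H(a) − M` if some greedy action is
taken, and `J(a) = 0` otherwise. -/
def J (H : ℕ) (M : ℝ) (a : Fin (H + 1) → Bool) : ℝ :=
  if ∃ t, a t = true then JH H a - M else 0

/-- With `M > H+1`:
`J_H(a_greedy) = H+1 > 0 = J_H(a_patient)` while
`J(a_greedy) = (H+1) − M < 0 = J(a_patient)`.  Hence optimizing the truncated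
objective `J_H` does not yield the same policy ordering as optimizing the
full-horizon objective `J`. -/
theorem opposite_orderings (H : ℕ) (M : ℝ) (hM : M > H + 1) :
    JH H (fun _ => true) = H + 1 ∧
    JH H (fun _ => false) = 0 ∧
    JH H (fun _ => false) < JH H (fun _ => true) ∧
    J H M (fun _ => true) = (H + 1) - M ∧
    J H M (fun _ => false) = 0 ∧
    J H M (fun _ => true) < J H M (fun _ => false) := by
  have h1 : JH H (fun _ => true) = H + 1 := by
    simp [JH]
  have h2 : JH H (fun _ => false) = 0 := by
    simp [JH]
  refine ⟨h1, h2, by rw [h1, h2]; positivity, ?_, ?_, ?_⟩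
  · rw [J, if_pos ⟨0, rfl⟩, h1]
  · rw [J, if_neg (by simp)]
  · rw [J, if_pos ⟨0, rfl⟩, h1, J, if_neg (by simp)]
    linarith
end

section
/- In the short-segment MDP with M > H+1, the suboptimality gap of horizon reduction equals M − (H+1) exactly: if a* is any maximizer of the true objective J and a_greedy is the unique maximizer of the truncated objective J_H, then J(a*) − J(a_greedy) = M − (H+1), and this quantity tends to infinity as M → ∞ for fixed H. -/
lemma JH_le (H : ℕ) (a : Fin (H + 1) → Bool) : JH H a ≤ H + 1 := by
  unfold JH
  have h : (Finset.univ.filter fun t => a t = true).card ≤ H + 1 := by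
    calc (Finset.univ.filter fun t => a t = true).card
        ≤ (Finset.univ : Finset (Fin (H+1))).card := Finset.card_filter_le _ _
      _ = H + 1 := by simp
  exact_mod_cast h

lemma JH_greedy (H : ℕ) : JH H (fun _ => true) = H + 1 := by
  unfold JH
  simp

theorem suboptimality_gap_exact (H : ℕ) (M : ℝ) (hM : M > H + 1) :
    (∀ a : Fin (H + 1) → Bool, JH H a ≤ JH H (fun _ => true)) ∧
    (∀ a : Fin (H + 1) → Bool, JH H a = JH H (fun _ => true) → a = fun _ => true) ∧
    (∀ astar : Fin (H + 1) → Bool,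
      (∀ a : Fin (H + 1) → Bool, J H M a ≤ J H M astar) →
      J H M astar - J H M (fun _ => true) = M - (H + 1)) ∧
    Filter.Tendsto (fun M' : ℝ => M' - (H + 1)) Filter.atTop Filter.atTop := by
  refine ⟨fun a => ?_, fun a ha => ?_, fun astar hmax => ?_, ?_⟩
  · rw [JH_greedy]; exact JH_le H a
  · rw [JH_greedy] at ha
    unfold JH at ha
    have hcard : (Finset.univ.filter fun t => a t = true).card = H + 1 := by
      exact_mod_cast ha
    have hfull : (Finset.univ.filter fun t => a t = true) = Finset.univ := by
      apply Finset.eq_univ_of_card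
      simpa using hcard
    funext t
    have := Finset.mem_filter.mp (hfull ▸ Finset.mem_univ t)
    simpa using this.2
  · have hzero : J H M astar = 0 := by
      have h1 : J H M (fun _ => false) = 0 := by
        unfold J; simp
      have h2 : (0 : ℝ) ≤ J H M astar := h1 ▸ hmax (fun _ => false)
      unfold J at h2 ⊢
      by_cases h : ∃ t, astar t = true
      · simp only [h, if_true] at h2 ⊢
        have := JH_le H astar
        linarith
      · simp [h]
    have hg : J H M (fun _ => true) = (H + 1 : ℝ) - M := by
      unfold J
      rw [if_pos ⟨0, rfl⟩, JH_greedy]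
    rw [hzero, hg]; ring
  · exact Filter.tendsto_atTop_add_const_right _ _ Filter.tendsto_id
end
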